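/- Let X ⊆ ℝ^d be a measurable set and let T be a measurable kernel on (0,∞) × X × X satisfying: (i) 0 ≤ T_t(x,y) ≤ C₀ t^ν (t + |x−y|²)^{−d/2−ν} for some C₀ > 0, ν ∈ (0,1); (ii) for every f ∈ L²(X), T_t f → f in L²(X) as t → 0⁺, where T_t f(x) = ∫_X T_t(x,y) f(y) dy. Then there exists a sequence t_n → 0⁺ such that for almost every x ∈ X and every r > 0: lim_{n→∞} ∫_{{y∈X : |x−y| > r}} T_{t_n}(x,y) dy = 0 and lim_{n→∞} ∫_{{y∈X : |x−y| ≤ r}} T_{t_n}(x,y) dy = 1. -/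

import Mathlib

open MeasureTheory Set Metric Filter
open scoped ENNReal NNReal Topology

noncomputable section

/-- `ℝ^d` with the Euclidean structure and the Lebesgue measure. -/
abbrev Rd (d : ℕ) := EuclideanSpace ℝ (Fin d)

/-- The cuboid `Q(z, r₁, …, r_d)`, always taken as a subset of `X`. -/
def cuboid {d : ℕ} (X : Set (Rd d)) (z : Rd d) (r : Fin d → ℝ) : Set (Rd d) :=
  {x ∈ X | ∀ i, |x i - z i| ≤ r i}

/-- The `k`-fold enlargement `Q^{*⋯*}` of the cuboid, with enlargement parameter `κ`
(`k = 1` is `Q^*`, `k = 2` is `Q^{**}`, `k = 3` is `Q^{***}`). -/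
def cuboidSt {d : ℕ} (X : Set (Rd d)) (z : Rd d) (r : Fin d → ℝ) (κ : ℝ) (k : ℕ) :
    Set (Rd d) :=
  cuboid X z fun i => κ ^ k * r i

/-- The classical heat kernel `H_t(x,y) = (4πt)^{-d/2} exp(-|x-y|²/(4t))` on `ℝ^d`. -/
def heatK (d : ℕ) (t : ℝ) (x y : Rd d) : ℝ :=
  (4 * Real.pi * t) ^ (-(d : ℝ) / 2) * Real.exp (-dist x y ^ 2 / (4 * t))

lemma stmt16_tail {d : ℕ} {X : Set (Rd d)} (hXmeas : MeasurableSet X)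
    (T : ℝ → Rd d → Rd d → ℝ) (C₀ ν : ℝ) (hC₀ : 0 < C₀) (hν0 : 0 < ν)
    (hA0 : ∀ t > 0, ∀ x ∈ X, ∀ y ∈ X,
      0 ≤ T t x y ∧ T t x y ≤ C₀ * t ^ ν * (t + dist x y ^ 2) ^ (-(d : ℝ) / 2 - ν))
    {x : Rd d} (hx : x ∈ X) {r t : ℝ} (hr : 0 < r) (ht : 0 < t) :
    ∫⁻ y in {y ∈ X | r < dist x y}, ENNReal.ofReal (T t x y) ≤
      ENNReal.ofReal (C₀ * (r / (r+1)) ^ (-((d:ℝ) + 2*ν)) * t ^ ν) *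
        ∫⁻ z : Rd d, ENNReal.ofReal ((1 + ‖z‖) ^ (-((d:ℝ) + 2*ν))) := by
  set s : ℝ := (d:ℝ) + 2*ν with hs
  have hd0 : (0:ℝ) ≤ d := Nat.cast_nonneg d
  have hs0 : 0 < s := by positivity
  set c : ℝ := C₀ * (r / (r+1)) ^ (-s) * t ^ ν with hc
  have hAmeas : MeasurableSet {y ∈ X | r < dist x y} :=
    hXmeas.inter ((isOpen_lt continuous_const (continuous_const.dist continuous_id)).measurableSet)
  have key : ∀ y ∈ {y ∈ X | r < dist x y},
      ENNReal.ofReal (T t x y) ≤ ENNReal.ofReal (c * (1 + dist x y) ^ (-s)) := by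
    rintro y ⟨hyX, hyr⟩
    have hdy : r < dist x y := hyr
    have hd1 : (0:ℝ) < dist x y := hr.trans hdy
    refine ENNReal.ofReal_le_ofReal ?_
    have h1 : T t x y ≤ C₀ * t ^ ν * (t + dist x y ^ 2) ^ (-(d : ℝ) / 2 - ν) :=
      (hA0 t ht x hx y hyX).2
    have hexp : -(d:ℝ)/2 - ν ≤ 0 := by linarith
    have h2 : (t + dist x y ^ 2) ^ (-(d:ℝ)/2 - ν) ≤ (dist x y ^ 2) ^ (-(d:ℝ)/2 - ν) :=
      Real.rpow_le_rpow_of_nonpos (by positivity) (by linarith) hexp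
    have h3 : ((dist x y ^ 2 : ℝ)) ^ (-(d:ℝ)/2 - ν) = dist x y ^ (-s) := by
      rw [← Real.rpow_natCast (dist x y) 2, ← Real.rpow_mul dist_nonneg]
      congr 1
      push_cast
      ring
    have h4 : dist x y ^ (-s) ≤ (r/(r+1)) ^ (-s) * (1 + dist x y) ^ (-s) := by
      have hbase : r/(r+1) * (1 + dist x y) ≤ dist x y := by
        rw [div_mul_eq_mul_div, div_le_iff₀ (by linarith)]
        nlinarith
      calc dist x y ^ (-s) ≤ (r/(r+1) * (1 + dist x y)) ^ (-s) :=
            Real.rpow_le_rpow_of_nonpos (by positivity) hbase (by linarith)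
        _ = (r/(r+1)) ^ (-s) * (1 + dist x y) ^ (-s) :=
            Real.mul_rpow (by positivity) (by positivity)
    have hC₀' : 0 ≤ C₀ := hC₀.le
    calc T t x y ≤ C₀ * t ^ ν * (t + dist x y ^ 2) ^ (-(d : ℝ) / 2 - ν) := h1
      _ ≤ C₀ * t ^ ν * (dist x y ^ (-s)) := by
          refine mul_le_mul_of_nonneg_left (h2.trans_eq h3) (by positivity)
      _ ≤ C₀ * t ^ ν * ((r/(r+1)) ^ (-s) * (1 + dist x y) ^ (-s)) :=
          mul_le_mul_of_nonneg_left h4 (by positivity)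
      _ = c * (1 + dist x y) ^ (-s) := by rw [hc]; ring
  have hc0 : 0 ≤ C₀ * (r / (r+1)) ^ (-s) := by positivity
  calc ∫⁻ y in {y ∈ X | r < dist x y}, ENNReal.ofReal (T t x y)
      ≤ ∫⁻ y in {y ∈ X | r < dist x y}, ENNReal.ofReal (c * (1 + dist x y) ^ (-s)) :=
        setLIntegral_mono' hAmeas key
    _ ≤ ∫⁻ y, ENNReal.ofReal (c * (1 + dist x y) ^ (-s)) := setLIntegral_le_lintegral _ _
    _ = ENNReal.ofReal (c) * ∫⁻ y, ENNReal.ofReal ((1 + dist x y) ^ (-s)) := by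
        simp_rw [ENNReal.ofReal_mul (by positivity : (0:ℝ) ≤ c)]
        exact lintegral_const_mul' _ _ ENNReal.ofReal_ne_top
    _ = ENNReal.ofReal (c) * ∫⁻ z, ENNReal.ofReal ((1 + ‖z‖) ^ (-s)) := by
        congr 1
        have : ∀ y : Rd d, dist x y = ‖y - x‖ := fun y => by rw [dist_comm, dist_eq_norm]
        simp_rw [this]
        exact lintegral_sub_right_eq_self (fun z => ENNReal.ofReal ((1 + ‖z‖) ^ (-s))) x

lemma ae_tendsto_of_eLpNorm_le {α : Type*} [MeasurableSpace α] (μ : Measure α)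
    (f : ℕ → α → ℝ) (g : α → ℝ) (m : ℕ)
    (hmeas : ∀ n, AEStronglyMeasurable (fun x => f n x - g x) μ)
    (hbound : ∀ n, m ≤ n → eLpNorm (fun x => f n x - g x) 2 μ ≤ (4:ℝ≥0∞)⁻¹ ^ n) :
    ∀ᵐ x ∂μ, Tendsto (fun n => f n x) atTop (𝓝 (g x)) := by
  set p : ℕ → α → Prop :=
    fun n x => m ≤ n ∧ ((2:ℝ≥0∞)⁻¹ ^ n ≤ (‖f n x - g x‖₊ : ℝ≥0∞)) with hp
  have hmu : ∀ n, μ {x | p n x} ≤ (4:ℝ≥0∞)⁻¹ ^ n := by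
    intro n
    by_cases hn : m ≤ n
    · have hset : {x | p n x} = {x | (2:ℝ≥0∞)⁻¹ ^ n ≤ (‖(fun x => f n x - g x) x‖₊ : ℝ≥0∞)} := by
        ext x; simp [hp, hn]
      rw [hset]
      have hmark := meas_ge_le_mul_pow_eLpNorm_enorm (μ := μ) (p := 2) two_ne_zero ENNReal.ofNat_ne_top
        (hmeas n) (ε := (2:ℝ≥0∞)⁻¹ ^ n) (pow_ne_zero n (by norm_num)) (fun h => absurd h (by simp))
      refine hmark.trans ?_
      have h2 : ((2:ℝ≥0∞) ^ (2:ℕ)) * ((4:ℝ≥0∞)⁻¹ ^ (2:ℕ)) = 4⁻¹ := by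
        rw [pow_two, pow_two, show (2:ℝ≥0∞)*2 = 4 by norm_num, ← mul_assoc,
          ENNReal.mul_inv_cancel (by norm_num) (by norm_num), one_mul]
      calc ((2:ℝ≥0∞)⁻¹ ^ n)⁻¹ ^ (2:ℝ≥0∞).toReal
            * eLpNorm (fun x => f n x - g x) 2 μ ^ (2:ℝ≥0∞).toReal
          ≤ ((2:ℝ≥0∞)⁻¹ ^ n)⁻¹ ^ (2:ℝ≥0∞).toReal * ((4:ℝ≥0∞)⁻¹ ^ n) ^ (2:ℝ≥0∞).toReal := by
            gcongr
            exact hbound n hn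
        _ = (4:ℝ≥0∞)⁻¹ ^ n := by
            rw [show ((2:ℝ≥0∞).toReal) = ((2:ℕ):ℝ) by simp,
              ENNReal.rpow_natCast, ENNReal.rpow_natCast,
              show ((2:ℝ≥0∞)⁻¹ ^ n)⁻¹ = 2 ^ n by rw [← ENNReal.inv_pow, inv_inv],
              pow_right_comm, pow_right_comm ((4:ℝ≥0∞)⁻¹), ← mul_pow, h2]
    · have hset : {x | p n x} = (∅ : Set α) := by
        ext x; simp [hp, hn]
      simp [hset]
  have hsum : (∑' n, μ {x | p n x}) ≠ ∞ := by
    refine ne_top_of_le_ne_top ?_ (ENNReal.tsum_le_tsum hmu)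
    rw [ENNReal.tsum_geometric]
    refine ENNReal.inv_ne_top.mpr ?_
    rw [Ne, tsub_eq_zero_iff_le]
    exact not_le.mpr (ENNReal.inv_lt_one.mpr (by norm_num))
  have hBC := measure_setOf_frequently_eq_zero (μ := μ) (p := p) hsum
  have hae : ∀ᵐ x ∂μ, ¬ ∃ᶠ n in atTop, p n x := by
    rw [ae_iff]
    simp only [not_not]
    exact hBC
  filter_upwards [hae] with x hx
  rw [Filter.not_frequently] at hx
  have hev : ∀ᶠ n in atTop, ‖f n x - g x‖ ≤ (2⁻¹:ℝ) ^ n := by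
    filter_upwards [hx, eventually_ge_atTop m] with n hn hmn
    have : ¬ ((2:ℝ≥0∞)⁻¹ ^ n ≤ (‖f n x - g x‖₊ : ℝ≥0∞)) := fun h => hn ⟨hmn, h⟩
    rw [not_le] at this
    have hcoe : ((2:ℝ≥0∞)⁻¹ ^ n) = (((2⁻¹:ℝ≥0) ^ n : ℝ≥0) : ℝ≥0∞) := by
      rw [ENNReal.coe_pow, ENNReal.coe_inv two_ne_zero, ENNReal.coe_ofNat]
    rw [hcoe, ENNReal.coe_lt_coe] at this
    have := le_of_lt this
    calc ‖f n x - g x‖ = ((‖f n x - g x‖₊ : ℝ≥0) : ℝ) := rfl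
      _ ≤ (((2⁻¹:ℝ≥0) ^ n : ℝ≥0) : ℝ) := by exact_mod_cast this
      _ = (2⁻¹:ℝ) ^ n := by push_cast; ring
  have h0 : Tendsto (fun n => f n x - g x) atTop (𝓝 0) :=
    squeeze_zero_norm' hev (tendsto_pow_atTop_nhds_zero_of_lt_one (by norm_num) (by norm_num))
  exact tendsto_sub_nhds_zero_iff.mp h0

/-- If a kernel `T` on a measurable `X ⊆ ℝ^d` satisfies the (A₀′) upper
bound and is strongly continuous on `L²(X)` at `t = 0⁺`, then there is a sequence `t_n → 0⁺`
such that for a.e. `x ∈ X` and every `r > 0`: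
`∫_{{|x−y|>r}} T_{t_n}(x,y) dy → 0` and `∫_{{|x−y|≤r}} T_{t_n}(x,y) dy → 1`. -/
theorem stmt16
    {d : ℕ} {X : Set (Rd d)} (hXmeas : MeasurableSet X)
    (T : ℝ → Rd d → Rd d → ℝ)
    (hTmeas : Measurable fun p : ℝ × Rd d × Rd d => T p.1 p.2.1 p.2.2)
    (C₀ ν : ℝ) (hC₀ : 0 < C₀) (hν : ν ∈ Set.Ioo (0 : ℝ) 1)
    -- (i)
    (hA0 : ∀ t > 0, ∀ x ∈ X, ∀ y ∈ X,
      0 ≤ T t x y ∧ T t x y ≤ C₀ * t ^ ν * (t + dist x y ^ 2) ^ (-(d : ℝ) / 2 - ν))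
    -- (ii) strong continuity on L²(X) as t → 0⁺
    (hcont : ∀ g : Rd d → ℝ, MemLp g 2 (volume.restrict X) →
      Tendsto (fun t => eLpNorm (fun x => (∫ y in X, T t x y * g y) - g x) 2
          (volume.restrict X))
        (nhdsWithin 0 (Set.Ioi 0)) (nhds 0)) :
    ∃ tseq : ℕ → ℝ, (∀ n, 0 < tseq n) ∧ Tendsto tseq atTop (nhds 0) ∧
      ∀ᵐ x ∂volume.restrict X, ∀ r > (0 : ℝ),
        Tendsto (fun n => ∫⁻ y in {y ∈ X | r < dist x y},
            ENNReal.ofReal (T (tseq n) x y)) atTop (nhds 0) ∧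
        Tendsto (fun n => ∫⁻ y in {y ∈ X | dist x y ≤ r},
            ENNReal.ofReal (T (tseq n) x y)) atTop (nhds 1) := by
  obtain ⟨hν0, hν1⟩ := hν
  have hd0 : (0:ℝ) ≤ d := Nat.cast_nonneg d
  set s : ℝ := (d:ℝ) + 2*ν with hs
  have hK : (∫⁻ z : Rd d, ENNReal.ofReal ((1 + ‖z‖) ^ (-s))) < ∞ := by
    apply finite_integral_one_add_norm
    rw [finrank_euclideanSpace_fin]
    simp only [hs]
    linarith
  set K := ∫⁻ z : Rd d, ENNReal.ofReal ((1 + ‖z‖) ^ (-s)) with hKdef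
  -- the indicator functions
  set g : ℕ → Rd d → ℝ :=
    fun m => (X ∩ closedBall (0:Rd d) m).indicator (fun _ => (1:ℝ)) with hgdef
  have hgmeas : ∀ m, Measurable (g m) := fun m =>
    measurable_const.indicator (hXmeas.inter measurableSet_closedBall)
  have hgmem : ∀ m, MemLp (g m) 2 (volume.restrict X) := fun m =>
    memLp_indicator_const 2 (hXmeas.inter measurableSet_closedBall) 1
      (Or.inr (((Measure.restrict_apply_le _ _).trans
        (measure_mono inter_subset_right)).trans_lt measure_closedBall_lt_top).ne)
  -- select the sequence
  have hsel : ∀ n : ℕ, ∃ t : ℝ, 0 < t ∧ t < 1/((n:ℝ)+1) ∧ ∀ m, m ≤ n →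
      eLpNorm (fun x => (∫ y in X, T t x y * g m y) - g m x) 2 (volume.restrict X)
        ≤ (4:ℝ≥0∞)⁻¹ ^ n := by
    intro n
    have h1 : ∀ᶠ t in 𝓝[>] (0:ℝ), t ∈ Ioo (0:ℝ) (1/((n:ℝ)+1)) :=
      Ioo_mem_nhdsGT_of_mem ⟨le_refl _, by positivity⟩
    have h2 : ∀ᶠ t in 𝓝[>] (0:ℝ), ∀ m ∈ Set.Iic n,
        eLpNorm (fun x => (∫ y in X, T t x y * g m y) - g m x) 2 (volume.restrict X)
          ≤ (4:ℝ≥0∞)⁻¹ ^ n := by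
      rw [eventually_all_finite (Set.finite_Iic n)]
      intro m _
      exact ((hcont (g m) (hgmem m)).eventually_lt_const
        (ENNReal.pow_pos (by norm_num) n)).mono fun t ht => ht.le
    obtain ⟨t, ht1, ht2⟩ := (h1.and h2).exists
    exact ⟨t, ht1.1, ht1.2, fun m hm => ht2 m hm⟩
  choose tseq htpos htlt hterr using hsel
  have htend : Tendsto tseq atTop (𝓝 (0:ℝ)) :=
    tendsto_of_tendsto_of_tendsto_of_le_of_le tendsto_const_nhds
      tendsto_one_div_add_atTop_nhds_zero_nat (fun n => (htpos n).le) (fun n => (htlt n).le)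
  refine ⟨tseq, htpos, htend, ?_⟩
  -- tail estimates
  have hpow0 : Tendsto (fun n => tseq n ^ ν) atTop (𝓝 (0:ℝ)) := by
    have h := (Real.continuousAt_rpow_const 0 ν (Or.inr hν0.le)).tendsto.comp htend
    simpa [Function.comp_def, Real.zero_rpow hν0.ne'] using h
  have hbnd0 : ∀ c : ℝ, Tendsto (fun n => ENNReal.ofReal (c * tseq n ^ ν) * K) atTop (𝓝 0) := by
    intro c
    have h1 : Tendsto (fun n => ENNReal.ofReal (c * tseq n ^ ν)) atTop (𝓝 0) := by
      have := (ENNReal.continuous_ofReal.tendsto (c*0)).comp (tendsto_const_nhds.mul hpow0)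
      simpa [Function.comp_def] using this
    have := ENNReal.Tendsto.mul_const h1 (Or.inr hK.ne)
    simpa using this
  have htail : ∀ x ∈ X, ∀ r : ℝ, 0 < r →
      Tendsto (fun n => ∫⁻ y in {y ∈ X | r < dist x y}, ENNReal.ofReal (T (tseq n) x y))
        atTop (𝓝 0) := by
    intro x hx r hr
    refine tendsto_of_tendsto_of_tendsto_of_le_of_le tendsto_const_nhds
      (hbnd0 (C₀ * (r/(r+1)) ^ (-s))) (fun n => zero_le) (fun n => ?_)
    exact stmt16_tail hXmeas T C₀ ν hC₀ hν0 hA0 hx hr (htpos n)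
  have htailfin : ∀ x ∈ X, ∀ r : ℝ, 0 < r → ∀ n,
      (∫⁻ y in {y ∈ X | r < dist x y}, ENNReal.ofReal (T (tseq n) x y)) ≠ ∞ := by
    intro x hx r hr n
    exact ((stmt16_tail hXmeas T C₀ ν hC₀ hν0 hA0 hx hr (htpos n)).trans_lt
      (ENNReal.mul_lt_top ENNReal.ofReal_lt_top hK)).ne
  -- a.e. convergence of the truncated means
  set F : ℕ → ℕ → Rd d → ℝ := fun m n x => ∫ y in X, T (tseq n) x y * g m y with hFdef
  have hFmeas : ∀ m n, AEStronglyMeasurable (fun x => F m n x - g m x) (volume.restrict X) := by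
    intro m n
    have hTm : StronglyMeasurable (fun p : Rd d × Rd d => T (tseq n) p.1 p.2 * g m p.2) :=
      ((hTmeas.comp (measurable_const.prodMk measurable_id)).mul
        ((hgmeas m).comp measurable_snd)).stronglyMeasurable
    exact (hTm.integral_prod_right'.aestronglyMeasurable.sub (hgmeas m).aestronglyMeasurable)
  have haecv : ∀ᵐ x ∂(volume.restrict X), ∀ m : ℕ,
      Tendsto (fun n => F m n x) atTop (𝓝 (g m x)) := by
    rw [ae_all_iff]
    intro m
    exact ae_tendsto_of_eLpNorm_le (volume.restrict X) (fun n => F m n) (g m) m (hFmeas m)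
      (fun n hn => hterr n m hn)
  -- conclusion
  filter_upwards [haecv, ae_restrict_mem hXmeas] with x hxcv hxX
  intro r hr
  refine ⟨htail x hxX r hr, ?_⟩
  -- choose m
  obtain ⟨m, hm⟩ := exists_nat_gt (‖x‖ + 2)
  have hxball : x ∈ X ∩ closedBall (0:Rd d) m := by
    refine ⟨hxX, ?_⟩
    rw [mem_closedBall, dist_zero_right]
    linarith
  have hgx : g m x = 1 := Set.indicator_of_mem hxball (fun _ => (1:ℝ))
  -- piece 1 equality
  have hpiece1 : ∀ n, (∫⁻ y in X ∩ closedBall (0:Rd d) m, ENNReal.ofReal (T (tseq n) x y))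
      = ENNReal.ofReal (F m n x) := by
    intro n
    have hmeasB : MeasurableSet (X ∩ closedBall (0:Rd d) m) :=
      hXmeas.inter measurableSet_closedBall
    have hfun : (fun y => T (tseq n) x y * g m y)
        = (X ∩ closedBall (0:Rd d) m).indicator (fun y => T (tseq n) x y) := by
      funext y
      by_cases hy : y ∈ X ∩ closedBall (0:Rd d) m
      · simp [hgdef, Set.indicator_of_mem hy]
      · simp [hgdef, Set.indicator_of_notMem hy]
    have hFeq : F m n x = ∫ y in X ∩ closedBall (0:Rd d) m, T (tseq n) x y := by
      rw [hFdef]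
      simp only []
      rw [hfun, integral_indicator hmeasB, Measure.restrict_restrict hmeasB,
        Set.inter_eq_left.mpr inter_subset_left]
    have hsect : Measurable (fun y => T (tseq n) x y) :=
      hTmeas.comp (measurable_const.prodMk (measurable_const.prodMk measurable_id))
    have hMbound : ∀ y ∈ X ∩ closedBall (0:Rd d) m,
        ‖T (tseq n) x y‖ ≤ C₀ * tseq n ^ ν * tseq n ^ (-(d : ℝ) / 2 - ν) := by
      intro y hy
      have h0 := (hA0 (tseq n) (htpos n) x hxX y hy.1).1
      have h1 := (hA0 (tseq n) (htpos n) x hxX y hy.1).2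
      rw [Real.norm_eq_abs, abs_of_nonneg h0]
      refine h1.trans ?_
      have : (tseq n + dist x y ^ 2) ^ (-(d : ℝ) / 2 - ν) ≤ tseq n ^ (-(d : ℝ) / 2 - ν) :=
        Real.rpow_le_rpow_of_nonpos (htpos n) (by nlinarith [sq_nonneg (dist x y)])
          (by linarith)
      have hpos : 0 ≤ C₀ * tseq n ^ ν := mul_nonneg hC₀.le (Real.rpow_nonneg (htpos n).le ν)
      exact mul_le_mul_of_nonneg_left this hpos
    have hint : IntegrableOn (fun y => T (tseq n) x y) (X ∩ closedBall (0:Rd d) m) volume := by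
      refine Integrable.mono' (g := fun _ => C₀ * tseq n ^ ν * tseq n ^ (-(d : ℝ) / 2 - ν))
        ?_ hsect.aestronglyMeasurable ?_
      · exact (integrableOn_const_iff enorm_ne_top).mpr (Or.inr
          ((measure_mono inter_subset_right).trans_lt measure_closedBall_lt_top))
      · filter_upwards [ae_restrict_mem hmeasB] with y hy
        exact hMbound y hy
    have hnn : 0 ≤ᵐ[volume.restrict (X ∩ closedBall (0:Rd d) m)] fun y => T (tseq n) x y := by
      filter_upwards [ae_restrict_mem hmeasB] with y hy
      exact (hA0 (tseq n) (htpos n) x hxX y hy.1).1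
    rw [hFeq, ofReal_integral_eq_lintegral_ofReal hint hnn]
  -- piece 1 tends to 1
  have hpiece1_lim : Tendsto (fun n =>
      ∫⁻ y in X ∩ closedBall (0:Rd d) m, ENNReal.ofReal (T (tseq n) x y)) atTop (𝓝 1) := by
    simp only [hpiece1]
    have := (ENNReal.continuous_ofReal.tendsto (g m x)).comp (hxcv m)
    rw [hgx] at this
    simpa [Function.comp_def] using this
  -- piece 2 tends to 0
  have hsub2 : X \ closedBall (0:Rd d) m ⊆ {y ∈ X | 1 < dist x y} := by
    rintro y ⟨hyX, hyb⟩
    rw [Set.mem_setOf_eq]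
    refine ⟨hyX, ?_⟩
    rw [mem_closedBall, dist_zero_right, not_le] at hyb
    have h1 : ‖y‖ - ‖x‖ ≤ ‖y - x‖ := norm_sub_norm_le y x
    have h2 : dist x y = ‖y - x‖ := by rw [dist_comm, dist_eq_norm]
    linarith
  have hpiece2_lim : Tendsto (fun n =>
      ∫⁻ y in X \ closedBall (0:Rd d) m, ENNReal.ofReal (T (tseq n) x y)) atTop (𝓝 0) := by
    refine tendsto_of_tendsto_of_tendsto_of_le_of_le tendsto_const_nhds
      (htail x hxX 1 one_pos) (fun n => zero_le) (fun n => lintegral_mono_set hsub2)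
  -- total integral tends to 1
  have htot : Tendsto (fun n => ∫⁻ y in X, ENNReal.ofReal (T (tseq n) x y)) atTop (𝓝 1) := by
    have hsplit : ∀ n, (∫⁻ y in X, ENNReal.ofReal (T (tseq n) x y))
        = (∫⁻ y in X ∩ closedBall (0:Rd d) m, ENNReal.ofReal (T (tseq n) x y))
          + (∫⁻ y in X \ closedBall (0:Rd d) m, ENNReal.ofReal (T (tseq n) x y)) := by
      intro n
      rw [← lintegral_union (hXmeas.diff measurableSet_closedBall)
        (disjoint_sdiff_self_right.mono_left inter_subset_right), Set.inter_union_diff]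
    simp only [hsplit]
    have := hpiece1_lim.add hpiece2_lim
    simpa using this
  -- split into near and far parts
  have hABS : ∀ n, (∫⁻ y in {y ∈ X | dist x y ≤ r}, ENNReal.ofReal (T (tseq n) x y))
      + (∫⁻ y in {y ∈ X | r < dist x y}, ENNReal.ofReal (T (tseq n) x y))
      = ∫⁻ y in X, ENNReal.ofReal (T (tseq n) x y) := by
    intro n
    have hunion : {y | y ∈ X ∧ dist x y ≤ r} ∪ {y | y ∈ X ∧ r < dist x y} = X := by
      ext y
      constructor
      · rintro (⟨h1, _⟩ | ⟨h1, _⟩) <;> exact h1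
      · intro hy
        rcases le_or_gt (dist x y) r with h | h
        · exact Or.inl ⟨hy, h⟩
        · exact Or.inr ⟨hy, h⟩
    rw [← lintegral_union (show MeasurableSet {y | y ∈ X ∧ r < dist x y} from
      hXmeas.inter (measurableSet_lt measurable_const (measurable_const.dist measurable_id)))
      (by rw [Set.disjoint_left]; rintro y ⟨_, h1⟩ ⟨_, h2⟩; exact absurd h1 (not_le.mpr h2)),
      hunion]
  have hAeq : ∀ n, (∫⁻ y in {y ∈ X | dist x y ≤ r}, ENNReal.ofReal (T (tseq n) x y))
      = (∫⁻ y in X, ENNReal.ofReal (T (tseq n) x y))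
        - (∫⁻ y in {y ∈ X | r < dist x y}, ENNReal.ofReal (T (tseq n) x y)) := fun n =>
    ENNReal.eq_sub_of_add_eq (htailfin x hxX r hr n) (hABS n)
  have := ENNReal.Tendsto.sub htot (htail x hxX r hr) (Or.inl ENNReal.one_ne_top)
  rw [tsub_zero] at this
  simp only [hAeq]
  exact this
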